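/- arXiv:2410.11757 — 3 statements merged into one kernel-verified Lean document; each statement's English description precedes it below -/
import Mathlib

section
/- Let λ_1, λ_2, λ_3 be nonzero column spinors in C^2 and λ̃_1, λ̃_2, λ̃_3 nonzero row spinors in C^2 satisfying momentum conservation λ_1 λ̃_1 + λ_2 λ̃_2 + λ_3 λ̃_3 = 0 (as 2×2 matrices). Then either ⟨12⟩ = ⟨23⟩ = ⟨31⟩ = 0 or [12] = [23] = [31] = 0, where ⟨ij⟩ = det(λ_i λ_j) and [ij] = det(λ̃_i^T λ̃_j^T). -/
def outer (u v : Fin 2 → ℂ) : Matrix (Fin 2) (Fin 2) ℂ := Matrix.of fun a b => u a * v b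

def ang (u v : Fin 2 → ℂ) : ℂ := u 0 * v 1 - u 1 * v 0

lemma ang_trans (u v w : Fin 2 → ℂ) (hv : v ≠ 0) (h1 : ang u v = 0) (h2 : ang v w = 0) :
    ang u w = 0 := by
  have key : ∀ b, ang u w * v b = ang u v * w b + ang v w * u b := by
    intro b
    fin_cases b <;> simp [ang] <;> ring
  obtain ⟨b, hb⟩ := Function.ne_iff.mp hv
  have hk := key b
  rw [h1, h2, zero_mul, zero_mul, add_zero] at hk
  rcases mul_eq_zero.mp hk with h | h
  · exact h
  · exact absurd h hb

lemma ang_antisymm (u v : Fin 2 → ℂ) : ang u v = - ang v u := by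
  simp [ang]; ring

theorem stmt4 (lam lamt : Fin 3 → Fin 2 → ℂ)
    (hl : ∀ i, lam i ≠ 0) (hlt : ∀ i, lamt i ≠ 0)
    (hmom : ∑ i, outer (lam i) (lamt i) = 0) :
    (ang (lam 0) (lam 1) = 0 ∧ ang (lam 1) (lam 2) = 0 ∧ ang (lam 2) (lam 0) = 0) ∨
    (ang (lamt 0) (lamt 1) = 0 ∧ ang (lamt 1) (lamt 2) = 0 ∧ ang (lamt 2) (lamt 0) = 0) := by
  have h : ∀ a b : Fin 2,
      lam 0 a * lamt 0 b + lam 1 a * lamt 1 b + lam 2 a * lamt 2 b = 0 := by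
    intro a b
    simpa [Fin.sum_univ_three, outer, Matrix.sum_apply] using
      congrFun (congrFun hmom a) b
  have e01 : ang (lam 0) (lam 1) * ang (lamt 2) (lamt 1) = 0 := by
    simp only [ang]
    linear_combination (lamt 2 0 * lam 0 0) * h 1 1 - (lamt 2 0 * lam 0 1) * h 0 1 - (lamt 2 1 * lam 0 0) * h 1 0 + (lamt 2 1 * lam 0 1) * h 0 0
  have e10 : ang (lam 1) (lam 0) * ang (lamt 2) (lamt 0) = 0 := by
    simp only [ang]
    linear_combination (lamt 2 0 * lam 1 0) * h 1 1 - (lamt 2 0 * lam 1 1) * h 0 1 - (lamt 2 1 * lam 1 0) * h 1 0 + (lamt 2 1 * lam 1 1) * h 0 0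
  have e12 : ang (lam 1) (lam 2) * ang (lamt 0) (lamt 2) = 0 := by
    simp only [ang]
    linear_combination (lamt 0 0 * lam 1 0) * h 1 1 - (lamt 0 0 * lam 1 1) * h 0 1 - (lamt 0 1 * lam 1 0) * h 1 0 + (lamt 0 1 * lam 1 1) * h 0 0
  have e21 : ang (lam 2) (lam 1) * ang (lamt 0) (lamt 1) = 0 := by
    simp only [ang]
    linear_combination (lamt 0 0 * lam 2 0) * h 1 1 - (lamt 0 0 * lam 2 1) * h 0 1 - (lamt 0 1 * lam 2 0) * h 1 0 + (lamt 0 1 * lam 2 1) * h 0 0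
  have e20 : ang (lam 2) (lam 0) * ang (lamt 1) (lamt 0) = 0 := by
    simp only [ang]
    linear_combination (lamt 1 0 * lam 2 0) * h 1 1 - (lamt 1 0 * lam 2 1) * h 0 1 - (lamt 1 1 * lam 2 0) * h 1 0 + (lamt 1 1 * lam 2 1) * h 0 0
  have e02 : ang (lam 0) (lam 2) * ang (lamt 1) (lamt 2) = 0 := by
    simp only [ang]
    linear_combination (lamt 1 0 * lam 0 0) * h 1 1 - (lamt 1 0 * lam 0 1) * h 0 1 - (lamt 1 1 * lam 0 0) * h 1 0 + (lamt 1 1 * lam 0 1) * h 0 0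
  by_cases h01 : ang (lam 0) (lam 1) = 0
  · by_cases h12 : ang (lam 1) (lam 2) = 0
    · by_cases h20 : ang (lam 2) (lam 0) = 0
      · exact Or.inl ⟨h01, h12, h20⟩
      · -- p20 ≠ 0
        right
        have q10 : ang (lamt 1) (lamt 0) = 0 :=
          (mul_eq_zero.mp e20).resolve_left h20
        have h02 : ang (lam 0) (lam 2) ≠ 0 := by
          rw [ang_antisymm]; simpa using h20
        have q12 : ang (lamt 1) (lamt 2) = 0 :=
          (mul_eq_zero.mp e02).resolve_left h02
        have q01 : ang (lamt 0) (lamt 1) = 0 := by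
          rw [ang_antisymm]; simp [q10]
        have q21 : ang (lamt 2) (lamt 1) = 0 := by
          rw [ang_antisymm]; simp [q12]
        have q20 : ang (lamt 2) (lamt 0) = 0 :=
          ang_trans _ (lamt 1) _ (hlt 1) q21 q10
        exact ⟨q01, q12, q20⟩
    · -- p12 ≠ 0
      right
      have q02 : ang (lamt 0) (lamt 2) = 0 :=
        (mul_eq_zero.mp e12).resolve_left h12
      have h21 : ang (lam 2) (lam 1) ≠ 0 := by
        rw [ang_antisymm]; simpa using h12
      have q01 : ang (lamt 0) (lamt 1) = 0 :=
        (mul_eq_zero.mp e21).resolve_left h21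
      have q20 : ang (lamt 2) (lamt 0) = 0 := by
        rw [ang_antisymm]; simp [q02]
      have q10 : ang (lamt 1) (lamt 0) = 0 := by
        rw [ang_antisymm]; simp [q01]
      have q12 : ang (lamt 1) (lamt 2) = 0 :=
        ang_trans _ (lamt 0) _ (hlt 0) q10 q02
      exact ⟨q01, q12, q20⟩
  · -- p01 ≠ 0
    right
    have q21 : ang (lamt 2) (lamt 1) = 0 :=
      (mul_eq_zero.mp e01).resolve_left h01
    have h10 : ang (lam 1) (lam 0) ≠ 0 := by
      rw [ang_antisymm]; simpa using h01
    have q20 : ang (lamt 2) (lamt 0) = 0 :=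
      (mul_eq_zero.mp e10).resolve_left h10
    have q12 : ang (lamt 1) (lamt 2) = 0 := by
      rw [ang_antisymm]; simp [q21]
    have q02 : ang (lamt 0) (lamt 2) = 0 := by
      rw [ang_antisymm]; simp [q20]
    have q01 : ang (lamt 0) (lamt 1) = 0 :=
      ang_trans _ (lamt 2) _ (hlt 2) q02 q21
    exact ⟨q01, q12, q20⟩
end

section
/- Let Z_1, ..., Z_n ∈ C^4 (n ≥ 4, indices mod n) with ⟨i i+1⟩ ≠ 0 for all i, where ⟨ij⟩ = Z_i^1 Z_j^2 − Z_i^2 Z_j^1. Define λ_i = (Z_i^1, Z_i^2) ∈ C^2 and, for A = 1, 2, λ̃_i^A = (⟨i−1 i⟩ Z_{i+1}^{A+2} + ⟨i+1 i−1⟩ Z_i^{A+2} + ⟨i i+1⟩ Z_{i−1}^{A+2}) / (⟨i−1 i⟩⟨i i+1⟩). Then momentum conservation holds: Σ_{i=1}^n λ_i λ̃_i = 0 as 2×2 matrices. -/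
def tang {n : ℕ} (Z : ZMod n → Fin 4 → ℂ) (i j : ZMod n) : ℂ :=
  Z i 0 * Z j 1 - Z i 1 * Z j 0

/-- The spinor `λᵢ`: the first two coordinates of the twistor `Zᵢ`. -/
def lam {n : ℕ} (Z : ZMod n → Fin 4 → ℂ) (i : ZMod n) : Fin 2 → ℂ :=
  fun A => Z i ⟨A.val, by omega⟩

/-- The spinor `λ̃ᵢ` recovered from the twistors. -/
noncomputable def lamt {n : ℕ} (Z : ZMod n → Fin 4 → ℂ) (i : ZMod n) : Fin 2 → ℂ :=
  fun A =>
    (tang Z (i - 1) i * Z (i + 1) ⟨A.val + 2, by omega⟩ +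
      tang Z (i + 1) (i - 1) * Z i ⟨A.val + 2, by omega⟩ +
      tang Z i (i + 1) * Z (i - 1) ⟨A.val + 2, by omega⟩) /
    (tang Z (i - 1) i * tang Z i (i + 1))

/-- The telescoping term. -/
noncomputable def Fmat {n : ℕ} (Z : ZMod n → Fin 4 → ℂ) (i : ZMod n) :
    Matrix (Fin 2) (Fin 2) ℂ :=
  Matrix.of fun a A =>
    (lam Z i a * Z (i + 1) ⟨A.val + 2, by omega⟩ -
      lam Z (i + 1) a * Z i ⟨A.val + 2, by omega⟩) / tang Z i (i + 1)

theorem stmt10 (n : ℕ) (hn : 4 ≤ n) [NeZero n] (Z : ZMod n → Fin 4 → ℂ)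
    (hadj : ∀ i, tang Z i (i + 1) ≠ 0) :
    ∑ i : ZMod n, outer (lam Z i) (lamt Z i) = 0 := by
  have key : ∀ i : ZMod n, outer (lam Z i) (lamt Z i) = Fmat Z i - Fmat Z (i - 1) := by
    intro i
    have h1 : tang Z (i - 1) i ≠ 0 := by
      have := hadj (i - 1); rwa [sub_add_cancel] at this
    have h2 := hadj i
    ext a A
    simp only [outer, Fmat, lamt, Matrix.sub_apply, Matrix.of_apply, sub_add_cancel]
    fin_cases a <;> fin_cases A <;>
      · simp only [lam, tang] at *
        field_simp
        simp only [Fin.zero_eta, Fin.mk_one]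
        ring
  rw [Finset.sum_congr rfl (fun i _ => key i), Finset.sum_sub_distrib]
  have : ∑ i : ZMod n, Fmat Z (i - 1) = ∑ i : ZMod n, Fmat Z i :=
    Fintype.sum_equiv (Equiv.subRight (1 : ZMod n)) _ _ (fun i => rfl)
  rw [this, sub_self]
end

section
/- Let Z_1, ..., Z_n ∈ C^4 and χ_1, ..., χ_n ∈ C^4 (n ≥ 4, indices mod n) with ⟨i i+1⟩ = Z_i^1 Z_j^2 − Z_i^2 Z_j^1 ≠ 0 (with j = i+1) for all i. Define λ_i = (Z_i^1, Z_i^2) and η_i^A = (⟨i−1 i⟩ χ_{i+1}^A + ⟨i+1 i−1⟩ χ_i^A + ⟨i i+1⟩ χ_{i−1}^A) / (⟨i−1 i⟩⟨i i+1⟩) for A = 1,...,4. Then Σ_{i=1}^n λ_i η_i = 0, where λ_i η_i denotes the 2×4 outer product matrix. -/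
/-- Outer product of a column 2-vector with a row 4-vector, a 2×4 matrix. -/
def outer24 (u : Fin 2 → ℂ) (v : Fin 4 → ℂ) : Matrix (Fin 2) (Fin 4) ℂ :=
  Matrix.of fun a b => u a * v b

/-- The Grassmann partner `ηᵢ` recovered from the fermionic twistor components `χᵢ`
(taken as ordinary complex vectors, since the identity is multilinear). -/
noncomputable def eta {n : ℕ} (Z : ZMod n → Fin 4 → ℂ) (chi : ZMod n → Fin 4 → ℂ)
    (i : ZMod n) : Fin 4 → ℂ :=
  fun A =>
    (tang Z (i - 1) i * chi (i + 1) A + tang Z (i + 1) (i - 1) * chi i A +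
      tang Z i (i + 1) * chi (i - 1) A) /
    (tang Z (i - 1) i * tang Z i (i + 1))

theorem stmt11 (n : ℕ) (hn : 4 ≤ n) [NeZero n] (Z chi : ZMod n → Fin 4 → ℂ)
    (hadj : ∀ i, tang Z i (i + 1) ≠ 0) :
    ∑ i : ZMod n, outer24 (lam Z i) (eta Z chi i) = 0 := by
  have h1 : ∀ i : ZMod n, tang Z (i - 1) i ≠ 0 := by
    intro i
    have := hadj (i - 1)
    simpa using this
  ext a b
  rw [Matrix.sum_apply]
  simp only [Matrix.zero_apply, outer24, Matrix.of_apply]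
  set F : ZMod n → ℂ := fun i =>
    lam Z i a * (tang Z (i - 1) i * chi (i + 1) b) /
      (tang Z (i - 1) i * tang Z i (i + 1)) with hF
  set G : ZMod n → ℂ := fun i =>
    lam Z i a * (tang Z (i + 1) (i - 1) * chi i b) /
      (tang Z (i - 1) i * tang Z i (i + 1)) with hG
  set H : ZMod n → ℂ := fun i =>
    lam Z i a * (tang Z i (i + 1) * chi (i - 1) b) /
      (tang Z (i - 1) i * tang Z i (i + 1)) with hH
  have hsplit : ∀ i : ZMod n, lam Z i a * eta Z chi i b = F i + G i + H i := by
    intro i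
    simp only [hF, hG, hH, eta]
    ring
  rw [Finset.sum_congr rfl (fun i _ => hsplit i)]
  rw [Finset.sum_add_distrib, Finset.sum_add_distrib]
  have hFs : ∑ i : ZMod n, F i = ∑ i : ZMod n, F (i - 1) :=
    (Equiv.sum_comp (Equiv.subRight (1 : ZMod n)) F).symm
  have hHs : ∑ i : ZMod n, H i = ∑ i : ZMod n, H (i + 1) :=
    (Equiv.sum_comp (Equiv.addRight (1 : ZMod n)) H).symm
  rw [hFs, hHs, ← Finset.sum_add_distrib, ← Finset.sum_add_distrib]
  apply Finset.sum_eq_zero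
  intro i _
  simp only [hF, hG, hH, sub_add_cancel, add_sub_cancel_right]
  have d1 := h1 (i - 1)
  have d2 := h1 i
  have d3 := hadj i
  have d4 := hadj (i + 1)
  field_simp
  fin_cases a <;> simp [lam, tang] <;> ring_nf <;> simp
end
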